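/- For integer k ≥ 1, real c ≥ 0 and x ≥ 0, the sum Σ_{i=1}^k γ(i+c, x)/Γ(i) equals (γ(k+c+1, x) + x^(c+1) Γ(k, x)) / ((c+1) Γ(k)), where γ(s,x) = Γ(s) - Γ(s,x) is the lower incomplete Gamma function. -/

import Mathlib

open Real MeasureTheory Set Finset

/-- Upper incomplete Gamma function `Γ(s, x) = ∫_x^∞ z^(s-1) e^(-z) dz`. -/
noncomputable def uGamma (s x : ℝ) : ℝ := ∫ z in Set.Ioi x, z ^ (s - 1) * Real.exp (-z)

/-- Lower incomplete Gamma function `γ(s, x) = Γ(s) - Γ(s, x)`. -/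
noncomputable def lGamma (s x : ℝ) : ℝ := Real.Gamma s - uGamma s x

lemma integrableOn_gam {s : ℝ} (hs : 0 < s) :
    IntegrableOn (fun z : ℝ => z ^ (s - 1) * Real.exp (-z)) (Set.Ioi 0) := by
  simpa [mul_comm] using Real.GammaIntegral_convergent hs

lemma lGamma_eq_Ioc {s : ℝ} (hs : 0 < s) {x : ℝ} (hx : 0 ≤ x) :
    lGamma s x = ∫ z in Set.Ioc 0 x, z ^ (s - 1) * Real.exp (-z) := by
  have hint := integrableOn_gam hs
  have hsplit : (∫ z in Set.Ioi (0:ℝ), z ^ (s - 1) * Real.exp (-z))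
      = (∫ z in Set.Ioc 0 x, z ^ (s - 1) * Real.exp (-z))
        + ∫ z in Set.Ioi x, z ^ (s - 1) * Real.exp (-z) := by
    rw [← MeasureTheory.setIntegral_union (Set.Ioc_disjoint_Ioi le_rfl) measurableSet_Ioi
      (hint.mono_set Set.Ioc_subset_Ioi_self)
      (hint.mono_set (Set.Ioi_subset_Ioi hx)), Set.Ioc_union_Ioi_eq_Ioi hx]
  have hG : Real.Gamma s = ∫ z in Set.Ioi (0:ℝ), z ^ (s - 1) * Real.exp (-z) := by
    rw [Real.Gamma_eq_integral hs]; simp_rw [mul_comm]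
  rw [lGamma, uGamma, hG, hsplit]; ring

set_option maxHeartbeats 1000000 in
lemma lGamma_eq_re {s : ℝ} (hs : 0 < s) {x : ℝ} (hx : 0 ≤ x) :
    lGamma s x = (Complex.partialGamma (s : ℂ) x).re := by
  rw [lGamma_eq_Ioc hs hx]
  have hpg : Complex.partialGamma (s:ℂ) x
      = ∫ t in Set.Ioc (0:ℝ) x, ((Real.exp (-t) : ℝ) : ℂ) * (t:ℂ) ^ ((s:ℂ) - 1) := by
    rw [Complex.partialGamma, intervalIntegral.integral_of_le hx]
  have hfeq : ∀ t ∈ Set.Ioc (0:ℝ) x,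
      ((Real.exp (-t) : ℝ) : ℂ) * (t:ℂ) ^ ((s:ℂ) - 1)
        = ((t ^ (s - 1) * Real.exp (-t) : ℝ) : ℂ) := by
    intro t ht
    have ht0 : 0 ≤ t := le_of_lt ht.1
    rw [show ((s : ℂ) - 1) = ((s - 1 : ℝ) : ℂ) by push_cast; ring, ← Complex.ofReal_cpow ht0,
      ← Complex.ofReal_mul]
    norm_cast
    ring
  have h2 : (∫ t in Set.Ioc (0:ℝ) x, ((t ^ (s - 1) * Real.exp (-t) : ℝ) : ℂ))
      = (((∫ t in Set.Ioc (0:ℝ) x, t ^ (s - 1) * Real.exp (-t)) : ℝ) : ℂ) := integral_ofReal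
  rw [hpg, MeasureTheory.setIntegral_congr_fun measurableSet_Ioc hfeq, h2, Complex.ofReal_re]

lemma lGamma_add_one {s : ℝ} (hs : 0 < s) {x : ℝ} (hx : 0 ≤ x) :
    lGamma (s + 1) x = s * lGamma s x - x ^ s * Real.exp (-x) := by
  have h := Complex.partialGamma_add_one (s := (s : ℂ)) (by simpa using hs) hx
  rw [lGamma_eq_re (by linarith) hx, lGamma_eq_re hs hx,
    show ((s + 1 : ℝ) : ℂ) = (s : ℂ) + 1 by push_cast; ring, h]
  rw [← Complex.ofReal_cpow hx, ← Complex.ofReal_mul]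
  simp only [Complex.sub_re, Complex.mul_re, Complex.ofReal_re, Complex.ofReal_im,
    zero_mul, sub_zero]
  ring

lemma uGamma_add_one {s : ℝ} (hs : 0 < s) {x : ℝ} (hx : 0 ≤ x) :
    uGamma (s + 1) x = s * uGamma s x + x ^ s * Real.exp (-x) := by
  have h1 : uGamma (s + 1) x = Real.Gamma (s + 1) - lGamma (s + 1) x := by
    rw [lGamma]; ring
  rw [h1, Real.Gamma_add_one (ne_of_gt hs), lGamma_add_one hs hx, lGamma]; ring

lemma uGamma_one (x : ℝ) : uGamma 1 x = Real.exp (-x) := by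
  rw [uGamma]
  simp_rw [sub_self, Real.rpow_zero, one_mul]
  exact integral_exp_neg_Ioi x

theorem stmt4 (k : ℕ) (hk : 1 ≤ k) (c x : ℝ) (hc : 0 ≤ c) (hx : 0 ≤ x) :
    ∑ i ∈ Finset.Icc 1 k, lGamma ((i : ℝ) + c) x / (Nat.factorial (i - 1) : ℝ)
      = (lGamma ((k : ℝ) + c + 1) x + x ^ (c + 1) * uGamma k x)
          / ((c + 1) * (Nat.factorial (k - 1) : ℝ)) := by
  have hc1 : (0:ℝ) < c + 1 := by linarith
  induction k with
  | zero => omega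
  | succ n ih =>
    rcases Nat.eq_or_lt_of_le hk with h1 | h1
    · have hn : n = 0 := by omega
      subst hn
      rw [show (0:ℕ)+1 = 1 from rfl, Finset.Icc_self, Finset.sum_singleton]
      have hrec : lGamma (c + 1 + 1) x = (c + 1) * lGamma (c + 1) x
          - x ^ (c + 1) * Real.exp (-x) := lGamma_add_one hc1 hx
      rw [show ((1:ℕ):ℝ) + c + 1 = c + 1 + 1 by push_cast; ring,
        show ((1:ℕ):ℝ) + c = c + 1 by push_cast; ring, hrec,
        show ((1:ℕ):ℝ) = (1:ℝ) by norm_num, uGamma_one,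
        show (1:ℕ) - 1 = 0 from rfl, Nat.factorial_zero]
      push_cast
      field_simp
      ring
    · have hn : 1 ≤ n := by omega
      rw [Finset.sum_Icc_succ_top (by omega : 1 ≤ n + 1), ih hn]
      have hnpos : (0:ℝ) < n := by exact_mod_cast hn
      have hL2 : lGamma ((↑(n+1) : ℝ) + c + 1) x
          = ((n:ℝ) + c + 1) * lGamma ((n:ℝ) + c + 1) x
            - x ^ ((n:ℝ) + c + 1) * Real.exp (-x) := by
        rw [show ((↑(n+1) : ℝ) + c + 1) = ((n:ℝ) + c + 1) + 1 by push_cast; ring]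
        exact lGamma_add_one (by linarith) hx
      have hpow : x ^ (c + 1) * x ^ ((n:ℝ) - 1 + 1) = x ^ ((n:ℝ) + c + 1) := by
        rw [← Real.rpow_add' hx (by intro h; nlinarith)]
        ring_nf
      have hU2 : x ^ (c + 1) * uGamma (↑(n+1) : ℝ) x
          = (n:ℝ) * (x ^ (c + 1) * uGamma ((n:ℝ) - 1 + 1) x)
            + x ^ ((n:ℝ) + c + 1) * Real.exp (-x) := by
        rw [show ((↑(n+1) : ℝ)) = ((n:ℝ) - 1 + 1) + 1 by push_cast; ring,
          uGamma_add_one (by linarith) hx]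
        rw [mul_add]
        rw [show x ^ (c+1) * (((n:ℝ)-1+1) * uGamma ((n:ℝ)-1+1) x)
            = (n:ℝ) * (x ^ (c+1) * uGamma ((n:ℝ)-1+1) x) by ring]
        rw [show x ^ (c+1) * (x ^ ((n:ℝ)-1+1) * Real.exp (-x))
            = (x ^ (c+1) * x ^ ((n:ℝ)-1+1)) * Real.exp (-x) by ring, hpow]
      have hU3 : uGamma ((n:ℝ) - 1 + 1) x = uGamma (n:ℝ) x := by ring_nf
      have hTerm : lGamma ((↑(n+1) : ℝ) + c) x = lGamma ((n:ℝ) + c + 1) x := by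
        norm_num
        ring_nf
      have hfac : (Nat.factorial (n + 1 - 1) : ℝ) = (n:ℝ) * (Nat.factorial (n - 1) : ℝ) := by
        rw [show n + 1 - 1 = n from rfl, ← Nat.mul_factorial_pred (by omega)]
        push_cast
        ring
      have hfacpos : (0:ℝ) < (Nat.factorial (n - 1) : ℝ) := by
        exact_mod_cast Nat.factorial_pos _
      rw [hL2, hU2, hU3, hTerm, hfac]
      field_simp
      ring
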